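/- Let m ≥ 4, let G = (ℤ/mℤ)², let g ∈ G, and let S = f₁^[m−1] · f₂^[m−1] · (f₁+f₂) ∈ Υ_nu(G), where (f₁,f₂) is a basis of G. If S' = f₂^[−1] · (f₁+f₂)^[−1] · S · (f₂+g) · (f₁+f₂−g) ∈ Υ_nu(G), then g ∈ {0, f₁} and S' = S. -/

import Mathlib

/-- `(e₁, e₂)` is a basis of the abelian group `G`, i.e. `G = ⟨e₁⟩ ⊕ ⟨e₂⟩`. -/
def IsBasis {G : Type*} [AddCommGroup G] (e₁ e₂ : G) : Prop :=
  AddSubgroup.zmultiples e₁ ⊔ AddSubgroup.zmultiples e₂ = ⊤ ∧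
    AddSubgroup.zmultiples e₁ ⊓ AddSubgroup.zmultiples e₂ = ⊥

/-- `Υ(G)` for `G = (ℤ/mℤ)²`: all sequences `e₁^[m-1] · ∏_{i=1}^m (xᵢe₁ + e₂)` for some
basis `(e₁, e₂)` and `x₁, …, x_m ∈ [0, m-1]` with `x₁ + ⋯ + x_m ≡ 1 (mod m)`. -/
def Upsilon (m : ℕ) : Set (Multiset (ZMod m × ZMod m)) :=
  { S | ∃ (e₁ e₂ : ZMod m × ZMod m) (x : Fin m → ℕ),
      IsBasis e₁ e₂ ∧ (∀ i, x i ≤ m - 1) ∧ (∑ i, x i) % m = 1 % m ∧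
      S = Multiset.replicate (m - 1) e₁ +
          Multiset.map (fun i => x i • e₁ + e₂) (Finset.univ : Finset (Fin m)).val }

/-- `Υ_u(G)`: members of `Υ(G)` with a unique term of multiplicity `m - 1`. -/
def UpsilonU (m : ℕ) : Set (Multiset (ZMod m × ZMod m)) :=
  { S | S ∈ Upsilon m ∧ ∃! g, S.count g = m - 1 }

/-- `Υ_nu(G)`: sequences `e₁^[m-1] · e₂^[m-1] · (e₁ + e₂)` for some basis `(e₁, e₂)`. -/
def UpsilonNU (m : ℕ) : Set (Multiset (ZMod m × ZMod m)) :=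
  { S | ∃ (e₁ e₂ : ZMod m × ZMod m), IsBasis e₁ e₂ ∧
      S = Multiset.replicate (m - 1) e₁ + Multiset.replicate (m - 1) e₂ + {e₁ + e₂} }



lemma zmultiples_ne_top (m : ℕ) (hm : 2 ≤ m) (x : ZMod m × ZMod m) :
    AddSubgroup.zmultiples x ≠ ⊤ := by
  haveI : Fact (1 < m) := ⟨by omega⟩
  intro h
  have h1 : ((1 : ZMod m), (0 : ZMod m)) ∈ AddSubgroup.zmultiples x := h ▸ trivial
  have h2 : ((0 : ZMod m), (1 : ZMod m)) ∈ AddSubgroup.zmultiples x := h ▸ trivial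
  obtain ⟨a, ha⟩ := AddSubgroup.mem_zmultiples_iff.mp h1
  obtain ⟨b, hb⟩ := AddSubgroup.mem_zmultiples_iff.mp h2
  rw [Prod.ext_iff] at ha hb
  obtain ⟨ha1, ha2⟩ := ha
  obtain ⟨hb1, hb2⟩ := hb
  simp only [Prod.smul_fst, Prod.smul_snd, zsmul_eq_mul, Prod.fst_mul, Prod.snd_mul, Prod.fst_intCast, Prod.snd_intCast] at ha1 ha2 hb1 hb2
  have : (1 : ZMod m) = 0 := by
    calc (1 : ZMod m) = ((a : ZMod m) * x.1) * ((b : ZMod m) * x.2) := by rw [ha1, hb2]; ring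
    _ = ((a : ZMod m) * x.2) * ((b : ZMod m) * x.1) := by ring
    _ = 0 := by rw [ha2, hb1]; ring
  exact one_ne_zero this

lemma basis_facts (m : ℕ) (hm : 2 ≤ m) (e₁ e₂ : ZMod m × ZMod m)
    (h : IsBasis e₁ e₂) : e₁ ≠ 0 ∧ e₂ ≠ 0 ∧ e₁ ≠ e₂ := by
  obtain ⟨hsup, hinf⟩ := h
  have h1 : e₁ ≠ 0 := by
    rintro rfl
    rw [AddSubgroup.zmultiples_zero_eq_bot, bot_sup_eq] at hsup
    exact zmultiples_ne_top m hm e₂ hsup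
  have h2 : e₂ ≠ 0 := by
    rintro rfl
    rw [AddSubgroup.zmultiples_zero_eq_bot, sup_bot_eq] at hsup
    exact zmultiples_ne_top m hm e₁ hsup
  refine ⟨h1, h2, fun he => h1 ?_⟩
  subst he
  rw [inf_idem] at hinf
  have := AddSubgroup.mem_zmultiples e₁
  rw [hinf] at this
  exact this


theorem stmt_12 (m : ℕ) (hm : 4 ≤ m) (g f₁ f₂ : ZMod m × ZMod m)
    (hbasis : IsBasis f₁ f₂)
    (S : Multiset (ZMod m × ZMod m))
    (hS : S = Multiset.replicate (m - 1) f₁ + Multiset.replicate (m - 1) f₂ + {f₁ + f₂})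
    (hSNU : S ∈ UpsilonNU m)
    (S' : Multiset (ZMod m × ZMod m))
    (hS' : S' = (S - {f₂, f₁ + f₂}) + {f₂ + g, f₁ + f₂ - g})
    (hS'U : S' ∈ UpsilonNU m) :
    (g = 0 ∨ g = f₁) ∧ S' = S := by
  have hm2 : 2 ≤ m := by omega
  obtain ⟨hf1, hf2, hf12⟩ := basis_facts m hm2 f₁ f₂ hbasis
  obtain ⟨e₁, e₂, hbe, hE⟩ := hS'U
  obtain ⟨he1, he2, he12⟩ := basis_facts m hm2 e₁ e₂ hbe
  have hff2 : f₂ ≠ f₁ + f₂ := fun h => hf1 (by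
    have := congrArg (fun z => z - f₂) h.symm
    simpa [add_sub_cancel_right] using this)
  -- count formula for S'
  have cnt : ∀ a, Multiset.count a S' =
      (if a = f₁ then m - 1 else 0) + (if a = f₂ then m - 2 else 0)
      + (if a = f₂ + g then 1 else 0) + (if a = f₁ + f₂ - g then 1 else 0) := by
    intro a
    rw [hS', hS]
    simp only [Multiset.insert_eq_cons, Multiset.count_add, Multiset.count_sub,
      Multiset.count_replicate, Multiset.count_cons, Multiset.count_singleton, eq_comm]
    split_ifs <;> first | omega | simp_all
  -- counts from S' ∈ UpsilonNU
  have hcount : ∀ a, S'.count a =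
      Multiset.count a (Multiset.replicate (m - 1) e₁ + Multiset.replicate (m - 1) e₂
        + ({e₁ + e₂} : Multiset _)) := fun a => by rw [hE]
  have hvals : ∀ a, Multiset.count a (Multiset.replicate (m - 1) e₁
      + Multiset.replicate (m - 1) e₂ + ({e₁ + e₂} : Multiset _)) = 0 ∨
      Multiset.count a (Multiset.replicate (m - 1) e₁
      + Multiset.replicate (m - 1) e₂ + ({e₁ + e₂} : Multiset _)) = 1 ∨
      Multiset.count a (Multiset.replicate (m - 1) e₁
      + Multiset.replicate (m - 1) e₂ + ({e₁ + e₂} : Multiset _)) = m - 1 := by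
    intro a
    rw [Multiset.count_add, Multiset.count_add, Multiset.count_replicate,
      Multiset.count_replicate, Multiset.count_singleton]
    by_cases h1 : e₁ = a
    · by_cases h3 : a = e₁ + e₂
      · exact absurd (left_eq_add.mp (h1 ▸ h3)) he2
      · subst h1
        rw [if_pos rfl, if_neg (fun hh : e₂ = e₁ => he12 hh.symm), if_neg h3]
        right; right; omega
    · by_cases h2 : e₂ = a
      · by_cases h3 : a = e₁ + e₂
        · subst h2
          exact absurd (right_eq_add.mp h3) he1
        · subst h2
          rw [if_neg h1, if_pos rfl, if_neg h3]
          right; right; omega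
      · by_cases h3 : a = e₁ + e₂
        · rw [if_neg h1, if_neg h2, if_pos h3]; right; left; omega
        · rw [if_neg h1, if_neg h2, if_neg h3]; left; omega
  -- key dichotomy
  have key2 : (g = 0 ∧ g ≠ f₁) ∨ (g ≠ 0 ∧ g = f₁) := by
    have h := (cnt f₂).symm.trans (hcount f₂)
    have hv := hvals f₂
    rw [if_neg (Ne.symm hf12), if_pos rfl] at h
    have c1 : (f₂ = f₂ + g) ↔ g = 0 := left_eq_add
    have c2 : (f₂ = f₁ + f₂ - g) ↔ g = f₁ := by
      rw [eq_sub_iff_add_eq, add_comm f₁ f₂, add_right_inj, eq_comm]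
    simp only [c1, c2] at h
    by_cases hA : g = 0 <;> by_cases hB : g = f₁
    · exact absurd (hA.symm.trans hB) (Ne.symm hf1)
    · exact Or.inl ⟨hA, hB⟩
    · exact Or.inr ⟨hA, hB⟩
    · rw [if_neg hA, if_neg hB] at h
      omega
  -- S' = S
  have hpair : ({f₂ + g, f₁ + f₂ - g} : Multiset _) = {f₂, f₁ + f₂} := by
    rcases key2 with ⟨h, _⟩ | ⟨_, h⟩
    · rw [h]; simp
    · rw [h, add_comm f₂ f₁, add_sub_cancel_left]
      exact Multiset.pair_comm _ _
  have hsub : ({f₂, f₁ + f₂} : Multiset _) ≤ S := by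
    rw [hS, Multiset.le_iff_count]
    intro a
    simp only [Multiset.insert_eq_cons, Multiset.count_cons, Multiset.count_singleton,
      Multiset.count_add, Multiset.count_replicate, eq_comm]
    split_ifs <;> first | omega | simp_all
  have hfinal : S' = S := by
    rw [hS', hpair, tsub_add_cancel_of_le hsub]
  refine ⟨?_, hfinal⟩
  rcases key2 with ⟨h, _⟩ | ⟨_, h⟩
  · exact Or.inl h
  · exact Or.inr h
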